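/- Let q be an odd prime power, let N ≡ 0 (mod 4) with N ≥ 4, set q' = q^{(N−2)/2}, and let F_{q'} be the field extension of F_q of degree (N−2)/2. If A ⊆ F_q² is a bicovering arc of size k, then the set C_A = {(α, α², u, v) : α ∈ F_{q'}, (u,v) ∈ A} ⊆ F_{q'} × F_{q'} × F_q × F_q (an F_q-vector space of dimension N) is a complete cap of size k·q^{(N−2)/2}. -/

import Mathlib

private lemma geom_parity {q : ℕ} (hq : q % 2 = 1) (n : ℕ) :
    (∑ i ∈ Finset.range n, q ^ i) % 2 = n % 2 := by
  induction n with
  | zero => simp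
  | succ n ih =>
    have hp : q ^ n % 2 = 1 := by rw [Nat.pow_mod, hq, one_pow]; rfl
    rw [Finset.sum_range_succ, Nat.add_mod, ih, hp]
    omega

private lemma geom_mul {q : ℕ} (hq : 1 ≤ q) (n : ℕ) :
    (q - 1) * (∑ i ∈ Finset.range n, q ^ i) = q ^ n - 1 := by
  have h1 : 1 ≤ q ^ n := Nat.one_le_pow _ _ hq
  have h := geom_sum_mul (x := (q : ℤ)) (n := n)
  zify [hq, h1]
  push_cast at h
  linear_combination h

private lemma pow_half_card {K : Type*} [Field K] [Fintype K] (hK : ringChar K ≠ 2)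
    {a : K} (ha : a ≠ 0) (hns : ¬ IsSquare a) : a ^ (Fintype.card K / 2) = -1 := by
  have h1 := FiniteField.pow_card_sub_one_eq_one a ha
  rw [← Nat.two_mul_odd_div_two (FiniteField.odd_card_of_char_ne_two hK), mul_comm, pow_mul,
    pow_two] at h1
  rcases mul_self_eq_one_iff.mp h1 with h | h
  · exact absurd ((FiniteField.isSquare_iff hK ha).mpr h) hns
  · exact h

private lemma isSquare_mul_inv_sq {K : Type*} [Field K] {x y : K}
    (hx : IsSquare x) (hy : IsSquare y) : IsSquare (x * y⁻¹) := by
  obtain ⟨s, rfl⟩ := hx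
  obtain ⟨t, rfl⟩ := hy
  exact ⟨s * t⁻¹, by rw [mul_inv]; ring⟩

private lemma isSquare_mul_inv_ns {K : Type*} [Field K] [Fintype K] (hK : ringChar K ≠ 2)
    {x y : K} (hx0 : x ≠ 0) (hy0 : y ≠ 0) (hx : ¬ IsSquare x) (hy : ¬ IsSquare y) :
    IsSquare (x * y⁻¹) := by
  refine (FiniteField.isSquare_iff hK (mul_ne_zero hx0 (inv_ne_zero hy0))).mpr ?_
  rw [mul_pow, inv_pow, pow_half_card hK hx0 hx, pow_half_card hK hy0 hy]
  norm_num

private lemma nonsquare_algebraMap {K L : Type*} [Field K] [Fintype K] [Field L] [Fintype L]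
    [Algebra K L] (hK : ringChar K ≠ 2) (hodd : Odd (Module.finrank K L)) {a : K} (ha : a ≠ 0)
    (hns : ¬ IsSquare a) : ¬ IsSquare (algebraMap K L a) := by
  set n := Module.finrank K L with hn
  set q := Fintype.card K with hqdef
  have hq1 : q % 2 = 1 := FiniteField.odd_card_of_char_ne_two hK
  have hcardL : Fintype.card L = q ^ n := Module.card_eq_pow_finrank
  have hqn2 : q ^ n % 2 = 1 := by rw [Nat.pow_mod, hq1, one_pow]; rfl
  have hL2 : ringChar L ≠ 2 := by
    intro h2
    have h3 := FiniteField.even_card_of_char_two h2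
    rw [hcardL] at h3
    omega
  set s := ∑ i ∈ Finset.range n, q ^ i with hs
  have hs_odd : Odd s := by
    rw [Nat.odd_iff, geom_parity hq1 n, ← Nat.odd_iff]
    exact hodd
  have hdiv : q ^ n / 2 = q / 2 * s := by
    have h2 : 2 * (q / 2) = q - 1 := Nat.two_mul_odd_div_two hq1
    have h3 : (q - 1) * s = q ^ n - 1 := geom_mul Fintype.card_pos n
    have hqn : 1 ≤ q ^ n := Nat.one_le_pow _ _ Fintype.card_pos
    have h4 : 2 * (q / 2 * s) = q ^ n - 1 := by rw [← mul_assoc, h2, h3]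
    omega
  intro hsq
  have h0 : algebraMap K L a ≠ 0 := by
    simpa using ha
  have hcon := (FiniteField.isSquare_iff hL2 h0).mp hsq
  rw [hcardL, hdiv, pow_mul, ← map_pow, pow_half_card hK ha hns, map_neg, map_one,
    hs_odd.neg_one_pow] at hcon
  exact Ring.neg_one_ne_one_of_char_ne_two hL2 hcon

private lemma exists_nonsquare_mul {K : Type*} [Field K] [Fintype K] (hK : ringChar K ≠ 2)
    (hcard : 3 < Fintype.card K) : ∃ l : K, ¬ IsSquare (l * (1 - l)) := by
  classical
  obtain ⟨ν, hν⟩ := FiniteField.exists_nonsquare hK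
  have hν0 : ν ≠ 0 := fun h => hν (h ▸ (⟨0, by ring⟩ : IsSquare (0 : K)))
  have h2 : (2 : K) ≠ 0 := Ring.two_ne_zero hK
  have hm : ∃ m : K, m ≠ 0 ∧ m ^ 2 + ν ≠ 0 := by
    by_cases hr : ∃ r : K, r ^ 2 = -ν
    · obtain ⟨r, hr⟩ := hr
      have hex : ∃ m : K, m ∉ ({0, r, -r} : Finset K) := by
        by_contra hall
        push_neg at hall
        have hsub : (Finset.univ : Finset K) ⊆ {0, r, -r} := fun x _ => hall x
        have hle := Finset.card_le_card hsub
        have h3 : ({0, r, -r} : Finset K).card ≤ 3 := by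
          refine (Finset.card_insert_le _ _).trans ?_
          have := Finset.card_insert_le r ({-r} : Finset K)
          simp only [Finset.card_singleton] at this
          omega
        rw [Finset.card_univ] at hle
        omega
      obtain ⟨m, hm⟩ := hex
      simp only [Finset.mem_insert, Finset.mem_singleton, not_or] at hm
      refine ⟨m, hm.1, fun h => ?_⟩
      have hfac : (m - r) * (m + r) = 0 := by linear_combination h - hr
      rcases mul_eq_zero.mp hfac with h' | h'
      · exact hm.2.1 (sub_eq_zero.mp h')
      · exact hm.2.2 (eq_neg_of_add_eq_zero_left h')
    · refine ⟨1, one_ne_zero, fun h => hr ⟨1, ?_⟩⟩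
      linear_combination h
  obtain ⟨m, hm0, hmv⟩ := hm
  set u : K := -(2 * m) / (m ^ 2 + ν) with hu_def
  have hu : (m ^ 2 + ν) * u = -(2 * m) := by
    rw [hu_def]; field_simp
  have hu0 : u ≠ 0 := by
    rw [hu_def]
    exact div_ne_zero (by simpa [h2] using hm0) hmv
  clear_value u
  clear hu_def
  refine ⟨(1 + (1 + m * u)) / 2, ?_⟩
  have key : (1 + (1 + m * u)) / 2 * (1 - (1 + (1 + m * u)) / 2) = ν * (u / 2) ^ 2 := by
    field_simp
    linear_combination (-u) * hu
  rw [key]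
  rintro ⟨t, ht⟩
  apply hν
  have hw : u / 2 ≠ 0 := div_ne_zero hu0 h2
  refine ⟨t / (u / 2), ?_⟩
  rw [div_mul_div_comm, eq_div_iff (mul_ne_zero hw hw)]
  linear_combination ht

section Collinear

variable {F V : Type*} [Field F] [AddCommGroup V] [Module F V]

private lemma collinear_of_rel {P Q1 Q2 : V} (lam : F) (h : P - Q1 = lam • (Q2 - Q1)) :
    Collinear F ({P, Q1, Q2} : Set V) := by
  rw [collinear_iff_of_mem (show Q1 ∈ ({P, Q1, Q2} : Set V) by simp)]
  refine ⟨Q2 - Q1, ?_⟩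
  intro p hp
  simp only [Set.mem_insert_iff, Set.mem_singleton_iff] at hp
  rcases hp with rfl | rfl | rfl
  · exact ⟨lam, by rw [← h, vadd_eq_add, sub_add_cancel]⟩
  · exact ⟨0, by simp⟩
  · exact ⟨1, by simp⟩

private lemma rel_of_collinear {s : Set V} {P Q1 Q2 : V} (hc : Collinear F s) (hP : P ∈ s)
    (h1 : Q1 ∈ s) (h2 : Q2 ∈ s) (h12 : Q1 ≠ Q2) :
    ∃ lam : F, P - Q1 = lam • (Q2 - Q1) := by
  rw [collinear_iff_of_mem h1] at hc
  obtain ⟨v, hv⟩ := hc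
  obtain ⟨a, ha⟩ := hv P hP
  obtain ⟨b, hb⟩ := hv Q2 h2
  have hb0 : b ≠ 0 := by
    rintro rfl
    simp only [zero_smul, vadd_eq_add, zero_add] at hb
    exact h12 hb.symm
  refine ⟨a / b, ?_⟩
  have hbv : Q2 - Q1 = b • v := by rw [hb, vadd_eq_add, add_sub_cancel_right]
  rw [ha, hbv, vadd_eq_add, add_sub_cancel_right, smul_smul, div_mul_cancel₀ _ hb0]

end Collinear

private lemma prod_rel_iff {F : Type*} [Field F] {a b c d e f : F} (lam : F) :
    ((a, b) : F × F) - (c, d) = lam • ((e, f) - (c, d)) ↔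
      a - c = lam * (e - c) ∧ b - d = lam * (f - d) := by
  simp [Prod.ext_iff, smul_eq_mul]

private lemma quad_rel_iff {F E : Type*} [Field F] [Field E] [Algebra F E] (lam : F)
    (x1 x2 y1 y2 z1 z2 : E) (w1 w2 u1 v1 u2 v2 : F) :
    ((x1, x2, w1, w2) : E × E × F × F) - (y1, y2, u1, v1)
        = lam • ((z1, z2, u2, v2) - (y1, y2, u1, v1)) ↔
      x1 - y1 = algebraMap F E lam * (z1 - y1) ∧ x2 - y2 = algebraMap F E lam * (z2 - y2) ∧
        w1 - u1 = lam * (u2 - u1) ∧ w2 - v1 = lam * (v2 - v1) := by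
  simp [Prod.ext_iff, smul_eq_mul, Algebra.smul_def]

private lemma beta_eq {F : Type*} [Field F] {P P1 P2 : F × F} {α β : F} (h12 : P1 ≠ P2)
    (hα : P - P1 = α • (P2 - P1)) (hβ : P - P2 = β • (P2 - P1)) : β = α - 1 := by
  have h0 : (α - β - 1) • (P2 - P1) = 0 := by
    rw [sub_smul, sub_smul, one_smul, ← hα, ← hβ]
    abel
  rcases smul_eq_zero.mp h0 with h | h
  · linear_combination -h
  · exact absurd (sub_eq_zero.mp h).symm h12

/-- An arc (cap): a set of points of an `F`-vector space, no three of which are collinear. -/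
def IsCap (F : Type*) [Field F] {V : Type*} [AddCommGroup V] [Module F V]
    (A : Set V) : Prop :=
  ∀ P₁ ∈ A, ∀ P₂ ∈ A, ∀ P₃ ∈ A, P₁ ≠ P₂ → P₁ ≠ P₃ → P₂ ≠ P₃ →
    ¬ Collinear F ({P₁, P₂, P₃} : Set V)

/-- A complete cap: a cap not contained in a larger cap. -/
def IsCompleteCap (F : Type*) [Field F] {V : Type*} [AddCommGroup V] [Module F V]
    (A : Set V) : Prop :=
  IsCap F A ∧ ∀ B : Set V, IsCap F B → A ⊆ B → B = A

/-- An arc in the affine plane. -/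
def IsArc (F : Type*) [Field F] (A : Set (F × F)) : Prop :=
  ∀ P₁ ∈ A, ∀ P₂ ∈ A, ∀ P₃ ∈ A, P₁ ≠ P₂ → P₁ ≠ P₃ → P₂ ≠ P₃ →
    ¬ Collinear F ({P₁, P₂, P₃} : Set (F × F))

/-- `P` is external to the segment `P₁P₂`: writing `P - P₁ = α • (P₂ - P₁)` and
`P - P₂ = β • (P₂ - P₁)`, the product `α * β` is a nonzero square. -/
def IsExternalSeg (F : Type*) [Field F] (P P₁ P₂ : F × F) : Prop :=
  ∃ α β : F, P - P₁ = α • (P₂ - P₁) ∧ P - P₂ = β • (P₂ - P₁) ∧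
    α * β ≠ 0 ∧ IsSquare (α * β)

/-- `P` is internal to the segment `P₁P₂`. -/
def IsInternalSeg (F : Type*) [Field F] (P P₁ P₂ : F × F) : Prop :=
  ∃ α β : F, P - P₁ = α • (P₂ - P₁) ∧ P - P₂ = β • (P₂ - P₁) ∧
    ¬ IsSquare (α * β)

/-- `P` is bicovered by `A`. -/
def IsBicovered (F : Type*) [Field F] (A : Set (F × F)) (P : F × F) : Prop :=
  (∃ P₁ ∈ A, ∃ P₂ ∈ A, P₁ ≠ P₂ ∧ P ≠ P₁ ∧ P ≠ P₂ ∧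
    Collinear F ({P, P₁, P₂} : Set (F × F)) ∧ IsExternalSeg F P P₁ P₂) ∧
  (∃ P₃ ∈ A, ∃ P₄ ∈ A, P₃ ≠ P₄ ∧ P ≠ P₃ ∧ P ≠ P₄ ∧
    Collinear F ({P, P₃, P₄} : Set (F × F)) ∧ IsInternalSeg F P P₃ P₄)

/-- A bicovering arc: an arc bicovering every point of the plane not in it. -/
def IsBicoveringArc (F : Type*) [Field F] (A : Set (F × F)) : Prop :=
  IsArc F A ∧ ∀ P ∉ A, IsBicovered F A P

theorem statement_2 (p h q : ℕ) (hp : p.Prime) (hp2 : p ≠ 2) (hh : 0 < h)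
    (hq : q = p ^ h)
    (F : Type) [Field F] [Fintype F] (hcard : Fintype.card F = q)
    (N : ℕ) (hN4 : N % 4 = 0) (hN : 4 ≤ N)
    (E : Type) [Field E] [Fintype E] [Algebra F E]
    (hdeg : Module.finrank F E = (N - 2) / 2)
    (A : Set (F × F)) (k : ℕ) (hA : IsBicoveringArc F A) (hk : A.ncard = k) :
    IsCompleteCap F {x : E × E × F × F | ∃ α : E, ∃ P ∈ A, x = (α, α ^ 2, P.1, P.2)} ∧
    Set.ncard {x : E × E × F × F | ∃ α : E, ∃ P ∈ A, x = (α, α ^ 2, P.1, P.2)}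
      = k * q ^ ((N - 2) / 2) := by
  classical
  set C : Set (E × E × F × F) := {x : E × E × F × F | ∃ α : E, ∃ P ∈ A, x = (α, α ^ 2, P.1, P.2)}
    with hC
  obtain ⟨hArc, hbic⟩ := hA
  have hinj : Function.Injective (algebraMap F E) := (algebraMap F E).injective
  have hqodd : q % 2 = 1 := Nat.odd_iff.mp (hq ▸ (hp.odd_of_ne_two hp2).pow)
  have hcharF : ringChar F ≠ 2 := by
    intro h2
    have h3 := FiniteField.even_card_of_char_two h2
    rw [hcard] at h3
    omega
  have h2F : (2 : F) ≠ 0 := Ring.two_ne_zero hcharF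
  have hnodd : Odd (Module.finrank F E) := by
    rw [hdeg, Nat.odd_iff]
    omega
  have hcardE : Fintype.card E = q ^ ((N - 2) / 2) := by
    rw [Module.card_eq_pow_finrank (K := F) (V := E), hcard, hdeg]
  have hcharE : ringChar E ≠ 2 := by
    intro h2
    have h3 := FiniteField.even_card_of_char_two h2
    rw [hcardE, Nat.pow_mod, hqodd, one_pow] at h3
    omega
  have h2E : (2 : E) ≠ 0 := Ring.two_ne_zero hcharE
  -- exclude q = 3
  have hq3 : 3 < Fintype.card F := by
    rcases lt_or_ge 3 (Fintype.card F) with hlt | hle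
    · exact hlt
    exfalso
    have hq3' : Fintype.card F = 3 := by
      have hp3 : 3 ≤ p := by
        have := hp.two_le
        omega
      have hpq : p ≤ q := hq ▸ Nat.le_self_pow hh.ne' p
      omega
    have hex : ∃ P : F × F, P ∉ A := by
      by_contra hall
      push_neg at hall
      have hne1 : ((-1 : F), (0 : F)) ≠ ((0 : F), (0 : F)) := by simp
      have hne2 : ((-1 : F), (0 : F)) ≠ ((1 : F), (0 : F)) := by
        simp only [Prod.mk.injEq, ne_eq, and_true]
        exact Ring.neg_one_ne_one_of_char_ne_two hcharF
      have hne3 : ((0 : F), (0 : F)) ≠ ((1 : F), (0 : F)) := by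
        intro h0
        rw [Prod.mk.injEq] at h0
        exact one_ne_zero h0.1.symm
      exact hArc (-1, 0) (hall _) (0, 0) (hall _) (1, 0) (hall _) hne1 hne2 hne3
        (collinear_of_rel (-1 : F) (by rw [prod_rel_iff]; constructor <;> ring))
    obtain ⟨P, hP⟩ := hex
    obtain ⟨⟨P1, h1, P2, h2, h12, -, -, -, α, β, hα, hβ, hab0, habsq⟩, -⟩ := hbic P hP
    have hβα : β = α - 1 := beta_eq h12 hα hβ
    have hβ0 : β ≠ 0 := right_ne_zero_of_mul hab0
    obtain ⟨y, hy⟩ := habsq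
    have hy0 : y ≠ 0 := by
      rintro rfl
      rw [mul_zero] at hy
      exact hab0 hy
    have hyy : y * y = 1 := by
      have hyc := FiniteField.pow_card_sub_one_eq_one y hy0
      rw [hq3'] at hyc
      simp only [show (3 : ℕ) - 1 = 2 from rfl, pow_two] at hyc
      exact hyc
    have hββ : β * β = 1 := by
      have hbc := FiniteField.pow_card_sub_one_eq_one β hβ0
      rw [hq3'] at hbc
      simp only [show (3 : ℕ) - 1 = 2 from rfl, pow_two] at hbc
      exact hbc
    have hab1 : α * β = 1 := by rw [hy, hyy]
    exact hβ0 (by linear_combination hab1 - hββ + β * hβα)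
  obtain ⟨lam₀, hlam₀⟩ := exists_nonsquare_mul hcharF hq3
  have hlam₀0 : lam₀ * (1 - lam₀) ≠ 0 := fun h0 => hlam₀ (h0 ▸ ⟨0, by ring⟩)
  -- the key covering property
  have key : ∀ x ∉ C, ∃ Q1 ∈ C, ∃ Q2 ∈ C, Q1 ≠ Q2 ∧
      Collinear F ({x, Q1, Q2} : Set (E × E × F × F)) := by
    rintro ⟨x1, x2, w1, w2⟩ hx
    by_cases hw : ((w1, w2) : F × F) ∈ A
    · -- the planar point below x is in A
      have hc0 : x2 - x1 ^ 2 ≠ 0 := by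
        intro h0
        apply hx
        simp only [hC, Set.mem_setOf_eq]
        exact ⟨x1, (w1, w2), hw, by simp [sub_eq_zero.mp h0]⟩
      have hchoice : ∃ (lam : F) (δ : E), δ ≠ 0 ∧
          x2 - x1 ^ 2 = algebraMap F E lam * (1 - algebraMap F E lam) * δ ^ 2 := by
        by_cases hsq : IsSquare (x2 - x1 ^ 2)
        · obtain ⟨e, he⟩ := hsq
          have he0 : e ≠ 0 := by
            rintro rfl
            rw [mul_zero] at he
            exact hc0 he
          refine ⟨(2 : F)⁻¹, 2 * e, mul_ne_zero h2E he0, ?_⟩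
          rw [map_inv₀, map_ofNat, he]
          field_simp
          ring
        · have hT0 : algebraMap F E (lam₀ * (1 - lam₀)) ≠ 0 := fun h0 =>
            hlam₀0 (hinj (h0.trans (map_zero _).symm))
          have hTns : ¬ IsSquare (algebraMap F E (lam₀ * (1 - lam₀))) :=
            nonsquare_algebraMap hcharF hnodd hlam₀0 hlam₀
          obtain ⟨e, he⟩ := isSquare_mul_inv_ns hcharE hc0 hT0 hsq hTns
          have hc' : x2 - x1 ^ 2 = e * e * algebraMap F E (lam₀ * (1 - lam₀)) :=
            (div_eq_iff hT0).mp (by rw [div_eq_mul_inv]; exact he)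
          have he0 : e ≠ 0 := by
            rintro rfl
            apply hc0
            rw [hc']
            ring
          refine ⟨lam₀, e, he0, ?_⟩
          rw [hc', map_mul, map_sub, map_one]
          ring
      obtain ⟨lam, δ, hδ0, hkey⟩ := hchoice
      refine ⟨(x1 - algebraMap F E lam * δ, (x1 - algebraMap F E lam * δ) ^ 2, w1, w2),
        by simp only [hC, Set.mem_setOf_eq]; exact ⟨_, (w1, w2), hw, rfl⟩,
        (x1 - algebraMap F E lam * δ + δ, (x1 - algebraMap F E lam * δ + δ) ^ 2, w1, w2),
        by simp only [hC, Set.mem_setOf_eq]; exact ⟨_, (w1, w2), hw, rfl⟩, ?_, ?_⟩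
      · intro heq
        simp only [Prod.mk.injEq] at heq
        exact hδ0 (by linear_combination -heq.1)
      · apply collinear_of_rel lam
        rw [quad_rel_iff]
        exact ⟨by ring, by linear_combination hkey, by ring, by ring⟩
    · -- the planar point below x is not in A: use bicovering
      obtain ⟨⟨⟨p11, p12⟩, h1, ⟨p21, p22⟩, h2, h12, -, -, -, α, β, hα, hβ, hab0, habsq⟩,
        ⟨⟨p31, p32⟩, h3, ⟨p41, p42⟩, h4, h34, -, -, -, γ, dl, hγ, hdl, hns⟩⟩ := hbic (w1, w2) hw
      have hβα : β = α - 1 := beta_eq h12 hα hβ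
      have hdlγ : dl = γ - 1 := beta_eq h34 hγ hdl
      rw [prod_rel_iff] at hα hγ
      by_cases hc0 : x2 - x1 ^ 2 = 0
      · refine ⟨(x1, x1 ^ 2, p11, p12),
          by simp only [hC, Set.mem_setOf_eq]; exact ⟨x1, (p11, p12), h1, rfl⟩,
          (x1, x1 ^ 2, p21, p22),
          by simp only [hC, Set.mem_setOf_eq]; exact ⟨x1, (p21, p22), h2, rfl⟩, ?_, ?_⟩
        · intro heq
          simp only [Prod.mk.injEq] at heq
          exact h12 (by rw [Prod.mk.injEq]; exact ⟨heq.2.2.1, heq.2.2.2⟩)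
        · apply collinear_of_rel α
          rw [quad_rel_iff]
          exact ⟨by ring, by linear_combination hc0, hα.1, hα.2⟩
      · -- generic case
        have build : ∀ (lam : F) (q11 q12 q21 q22 : F),
            ((q11, q12) : F × F) ∈ A → ((q21, q22) : F × F) ∈ A →
            ((q11, q12) : F × F) ≠ (q21, q22) →
            (w1 - q11 = lam * (q21 - q11) ∧ w2 - q12 = lam * (q22 - q12)) →
            ∀ e : E, x2 - x1 ^ 2 = algebraMap F E lam * (1 - algebraMap F E lam) * e ^ 2 →
            ∃ Q1 ∈ C, ∃ Q2 ∈ C, Q1 ≠ Q2 ∧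
              Collinear F ({(x1, x2, w1, w2), Q1, Q2} : Set (E × E × F × F)) := by
          rintro lam q11 q12 q21 q22 hq1 hq2 hqne ⟨hr1, hr2⟩ e hkey
          refine ⟨(x1 - algebraMap F E lam * e, (x1 - algebraMap F E lam * e) ^ 2, q11, q12),
            by simp only [hC, Set.mem_setOf_eq]; exact ⟨_, (q11, q12), hq1, rfl⟩,
            (x1 - algebraMap F E lam * e + e, (x1 - algebraMap F E lam * e + e) ^ 2, q21, q22),
            by simp only [hC, Set.mem_setOf_eq]; exact ⟨_, (q21, q22), hq2, rfl⟩, ?_, ?_⟩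
          · intro heq
            simp only [Prod.mk.injEq] at heq
            exact hqne (by rw [Prod.mk.injEq]; exact ⟨heq.2.2.1, heq.2.2.2⟩)
          · apply collinear_of_rel lam
            rw [quad_rel_iff]
            exact ⟨by ring, by linear_combination hkey, hr1, hr2⟩
        by_cases hsqc : IsSquare (-(x2 - x1 ^ 2))
        · -- use the external pair
          have hT0 : algebraMap F E (α * β) ≠ 0 := fun h0 =>
            hab0 (hinj (h0.trans (map_zero _).symm))
          have hTsq : IsSquare (algebraMap F E (α * β)) := habsq.map (algebraMap F E)
          obtain ⟨e, he⟩ := isSquare_mul_inv_sq hsqc hTsq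
          have hc' : -(x2 - x1 ^ 2) = e * e * algebraMap F E (α * β) :=
            (div_eq_iff hT0).mp (by rw [div_eq_mul_inv]; exact he)
          have hmap : algebraMap F E (α * β)
              = algebraMap F E α * (algebraMap F E α - 1) := by
            rw [hβα, map_mul, map_sub, map_one]
          exact build α p11 p12 p21 p22 h1 h2 h12 hα e
            (by rw [hmap] at hc'; linear_combination -hc')
        · -- use the internal pair
          have hns0 : γ * dl ≠ 0 := fun h0 => hns (h0 ▸ ⟨0, by ring⟩)
          have hT0 : algebraMap F E (γ * dl) ≠ 0 := fun h0 =>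
            hns0 (hinj (h0.trans (map_zero _).symm))
          have hTns : ¬ IsSquare (algebraMap F E (γ * dl)) :=
            nonsquare_algebraMap hcharF hnodd hns0 hns
          obtain ⟨e, he⟩ := isSquare_mul_inv_ns hcharE (neg_ne_zero.mpr hc0) hT0 hsqc hTns
          have hc' : -(x2 - x1 ^ 2) = e * e * algebraMap F E (γ * dl) :=
            (div_eq_iff hT0).mp (by rw [div_eq_mul_inv]; exact he)
          have hmap : algebraMap F E (γ * dl)
              = algebraMap F E γ * (algebraMap F E γ - 1) := by
            rw [hdlγ, map_mul, map_sub, map_one]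
          exact build γ p31 p32 p41 p42 h3 h4 h34 hγ e
            (by rw [hmap] at hc'; linear_combination -hc')
  -- C is a cap
  have hcap : IsCap F C := by
    rintro P1 h1 P2 h2 P3 h3 h12 h13 h23 hcol
    simp only [hC, Set.mem_setOf_eq] at h1 h2 h3
    obtain ⟨a1, ⟨b11, b12⟩, hb1, rfl⟩ := h1
    obtain ⟨a2, ⟨b21, b22⟩, hb2, rfl⟩ := h2
    obtain ⟨a3, ⟨b31, b32⟩, hb3, rfl⟩ := h3
    have m1 : (a1, a1 ^ 2, b11, b12) ∈ ({(a1, a1 ^ 2, b11, b12), (a2, a2 ^ 2, b21, b22),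
        (a3, a3 ^ 2, b31, b32)} : Set (E × E × F × F)) := by simp
    have m2 : (a2, a2 ^ 2, b21, b22) ∈ ({(a1, a1 ^ 2, b11, b12), (a2, a2 ^ 2, b21, b22),
        (a3, a3 ^ 2, b31, b32)} : Set (E × E × F × F)) := by simp
    have m3 : (a3, a3 ^ 2, b31, b32) ∈ ({(a1, a1 ^ 2, b11, b12), (a2, a2 ^ 2, b21, b22),
        (a3, a3 ^ 2, b31, b32)} : Set (E × E × F × F)) := by simp
    obtain ⟨μ, hrel⟩ := rel_of_collinear hcol m3 m1 m2 h12
    rw [quad_rel_iff] at hrel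
    obtain ⟨e1, e2, e3, e4⟩ := hrel
    by_cases ha12 : a1 = a2
    · subst ha12
      have ha31 : a3 = a1 := by linear_combination e1
      have hbne12 : ((b11, b12) : F × F) ≠ (b21, b22) := by
        intro hb
        rw [Prod.mk.injEq] at hb
        exact h12 (by rw [hb.1, hb.2])
      have hbne13 : ((b11, b12) : F × F) ≠ (b31, b32) := by
        intro hb
        rw [Prod.mk.injEq] at hb
        exact h13 (by rw [hb.1, hb.2, ha31])
      have hbne23 : ((b21, b22) : F × F) ≠ (b31, b32) := by
        intro hb
        rw [Prod.mk.injEq] at hb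
        exact h23 (by rw [hb.1, hb.2, ha31])
      exact hArc (b31, b32) hb3 (b11, b12) hb1 (b21, b22) hb2 hbne13.symm hbne23.symm hbne12
        (collinear_of_rel μ (by rw [prod_rel_iff]; exact ⟨e3, e4⟩))
    · by_cases hm0 : algebraMap F E μ = 0
      · have hμ0 : μ = 0 := hinj (hm0.trans (map_zero _).symm)
        apply h13
        rw [hm0] at e1
        rw [hμ0] at e3 e4
        have : a3 = a1 := by linear_combination e1
        rw [this, show b31 = b11 by linear_combination e3, show b32 = b12 by linear_combination e4]
      · have hkey : algebraMap F E μ * (a2 - a1) * (a3 - a2) = 0 := by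
          linear_combination e2 - (a3 + a1) * e1
        rcases mul_eq_zero.mp hkey with hk1 | hk2
        · rcases mul_eq_zero.mp hk1 with hk3 | hk4
          · exact hm0 hk3
          · exact ha12 (sub_eq_zero.mp hk4).symm
        · have ha32 : a3 = a2 := sub_eq_zero.mp hk2
          have hm1 : algebraMap F E μ = 1 := by
            have h5 : (algebraMap F E μ - 1) * (a2 - a1) = 0 := by
              rw [ha32] at e1
              linear_combination -e1
            rcases mul_eq_zero.mp h5 with h6 | h6
            · linear_combination h6
            · exact absurd (sub_eq_zero.mp h6).symm ha12
          have hμ1 : μ = 1 := hinj (hm1.trans (map_one _).symm)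
          apply h23
          rw [hμ1] at e3 e4
          rw [ha32, show b31 = b21 by linear_combination e3,
            show b32 = b22 by linear_combination e4]
  -- counting
  have himg : C = (fun y : E × (F × F) => (y.1, y.1 ^ 2, y.2.1, y.2.2)) '' (Set.univ ×ˢ A) := by
    rw [hC]
    ext z
    simp only [Set.mem_setOf_eq, Set.mem_image, Set.mem_prod, Set.mem_univ, true_and]
    constructor
    · rintro ⟨a, P, hP, rfl⟩
      exact ⟨(a, P), hP, rfl⟩
    · rintro ⟨⟨a, P⟩, hP, rfl⟩
      exact ⟨a, P, hP, rfl⟩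
  have hmapinj : Function.Injective
      (fun y : E × (F × F) => ((y.1, y.1 ^ 2, y.2.1, y.2.2) : E × E × F × F)) := by
    rintro ⟨a, u, v⟩ ⟨b, u', v'⟩ hyz
    simp only [Prod.mk.injEq] at hyz
    simp only [Prod.mk.injEq]
    exact ⟨hyz.1, hyz.2.2.1, hyz.2.2.2⟩
  have hcount : C.ncard = Fintype.card E * k := by
    rw [himg, Set.ncard_image_of_injective _ hmapinj, ← Nat.card_coe_set_eq,
      Nat.card_congr (Equiv.Set.prod _ _), Nat.card_prod,
      Nat.card_congr (Equiv.Set.univ E), Nat.card_eq_fintype_card,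
      Nat.card_coe_set_eq, hk]
  refine ⟨⟨hcap, ?_⟩, by rw [hcount, hcardE, Nat.mul_comm]⟩
  intro B hB hsubset
  apply Set.Subset.antisymm ?_ hsubset
  intro x hxB
  by_contra hxC
  obtain ⟨Q1, hQ1, Q2, hQ2, hQne, hQcol⟩ := key x hxC
  exact hB x hxB Q1 (hsubset hQ1) Q2 (hsubset hQ2) (fun h0 => hxC (h0 ▸ hQ1))
    (fun h0 => hxC (h0 ▸ hQ2)) hQne hQcol
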